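/- Let A be a group with action on itself and I ⊆ A an ideal (a normal subgroup with i^a ∈ I and -a + a^i ∈ I for all i ∈ I, a ∈ A). Then the maps a·i = a + i - a, i^{▷a} = i^a, and a^{∘i} = a^i - a define a derived action of A on I, i.e. they satisfy the group action laws for ·, conditions (1_A)–(4_A) and (1_B)–(4_B), and i^{▷0_A} = i. -/
import Mathlib


/-- A group with action on itself: a (not necessarily abelian) additive group `G`
with a map `act g h = g^h` satisfying `g^(h+h') = (g^h)^{h'}`, `g^0 = g`,
`(g+g')^h = g^h + g'^h`. -/
class Gwa (G : Type*) extends AddGroup G where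
  act : G → G → G
  act_add : ∀ g h h' : G, act g (h + h') = act (act g h) h'
  act_zero : ∀ g : G, act g 0 = g
  add_act : ∀ g g' h : G, act (g + g') h = act g h + act g' h

open Gwa

/-- Morphisms of groups with action on themselves. -/
def IsGwaHom {G H : Type*} [Gwa G] [Gwa H] (f : G → H) : Prop :=
  (∀ a b : G, f (a + b) = f a + f b) ∧ ∀ a b : G, f (act a b) = act (f a) (f b)

theorem ideal_action_is_derived {A : Type*} [Gwa A] (I : AddSubgroup A)
    (hnorm : ∀ i ∈ I, ∀ a : A, a + i - a ∈ I)
    (hmem1 : ∀ i ∈ I, ∀ a : A, act i a ∈ I)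
    (hmem2 : ∀ i ∈ I, ∀ a : A, -a + act a i ∈ I) :
    -- the three maps land in I
    (∀ i ∈ I, ∀ a : A, a + i - a ∈ I ∧ act i a ∈ I ∧ act a i - a ∈ I) ∧
    -- dot is a left group action
    (∀ a : A, ∀ i ∈ I, ∀ i' ∈ I, a + (i + i') - a = (a + i - a) + (a + i' - a)) ∧
    (∀ a a' : A, ∀ i ∈ I, (a + a') + i - (a + a') = a + (a' + i - a') - a) ∧
    (∀ i ∈ I, (0 : A) + i - 0 = i) ∧
    -- (1_A)
    (∀ i ∈ I, ∀ i' ∈ I, ∀ a : A, act (i + i') a = act i a + act i' a) ∧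
    -- (2_A)
    (∀ a a' : A, ∀ i ∈ I, act (a + a') i - (a + a') = (act a i - a) + (a + (act a' i - a') - a)) ∧
    -- (3_A)
    (∀ a : A, ∀ i ∈ I, ∀ i' ∈ I,
      act (a + i - a) i' + (act a i' - a) = (act a i' - a) + (a + act i i' - a)) ∧
    -- (4_A)
    (∀ a a' : A, ∀ i ∈ I, act (a + i - a) a' = act a a' + act i a' - act a a') ∧
    -- (1_B)
    (∀ a : A, ∀ i ∈ I, ∀ i' ∈ I, act a (i + i') - a = act (act a i - a) i' + (act a i' - a)) ∧
    -- (2_B)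
    (∀ i ∈ I, ∀ a a' : A, act i (a + a') = act (act i a) a') ∧
    -- (3_B)
    (∀ i ∈ I, ∀ i' ∈ I, ∀ a : A, act (act i (a + i' - a)) a = act (act i a) i') ∧
    -- (4_B)
    (∀ a a' : A, ∀ i ∈ I, act (act a (a' + i - a') - a) a' = act (act a a') i - act a a') ∧
    -- i^{▷0_A} = i
    (∀ i ∈ I, act i (0 : A) = i) := by
  have z : ∀ h : A, act (0 : A) h = 0 := by
    intro h
    have := add_act (0 : A) 0 h
    rw [add_zero] at this
    exact (left_eq_add.mp this).symm ▸ (add_right_cancel (a := act (0:A) h) (by rw [← this, zero_add]))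
  have nact : ∀ g h : A, act (-g) h = -act g h := by
    intro g h
    have := add_act (-g) g h
    rw [neg_add_cancel, z] at this
    exact eq_neg_of_add_eq_zero_left this.symm
  have sact : ∀ g g' h : A, act (g - g') h = act g h - act g' h := by
    intro g g' h
    rw [sub_eq_add_neg, add_act, nact, sub_eq_add_neg]
  refine ⟨?_, ?_, ?_, ?_, ?_, ?_, ?_, ?_, ?_, ?_, ?_, ?_, ?_⟩
  · intro i hi a
    refine ⟨hnorm i hi a, hmem1 i hi a, ?_⟩
    have := hnorm _ (hmem2 i hi a) a
    have e : a + (-a + act a i) - a = act a i - a := by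
      rw [← add_assoc, add_neg_cancel, zero_add]
    rwa [e] at this
  · intro a i _ i' _
    simp [sub_eq_add_neg, add_assoc]
  · intro a a' i _
    simp [sub_eq_add_neg, add_assoc]
  · intro i _; simp
  · intro i _ i' _ a; exact add_act i i' a
  · intro a a' i _
    rw [add_act]
    simp [sub_eq_add_neg, add_assoc]
  · intro a i _ i' _
    rw [sub_eq_add_neg, add_act, add_act, nact]
    simp [sub_eq_add_neg, add_assoc]
  · intro a a' i _
    rw [sub_eq_add_neg, add_act, add_act, nact, sub_eq_add_neg]
  · intro a i _ i' _
    rw [sact, ← act_add]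
    simp [sub_eq_add_neg, add_assoc]
  · intro i _ a a'; exact act_add i a a'
  · intro i _ i' _ a
    rw [sub_eq_add_neg, act_add, act_add, ← act_add, neg_add_cancel, act_zero]
  · intro a a' i _
    have e : act a (a' + i - a') = act (act (act a a') i) (-a') := by
      rw [sub_eq_add_neg, act_add, act_add]
    rw [sact, e, ← act_add, neg_add_cancel, act_zero]
  · intro i _; exact act_zero i
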